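/- Let X ⊆ ℝⁿ be convex, K ∈ ℝ^{m×n}, y ∈ ℝ^m, λ > 0, and R : ℝⁿ → ℝ be convex, and let J(x) = (1/2)‖Kx − y‖₂² + λR(x). If x₁ and x₂ both minimize J over X, then R(x₁) = R(x₂). -/
import Mathlib


open Matrix Finset

/-- If `x₁` and `x₂` both minimize `J(x) = (1/2)‖Kx − y‖₂² + λ R(x)` over the
convex set `X`, with `λ > 0` and `R` convex, then `R(x₁) = R(x₂)`. -/
theorem stmt2 (m n : ℕ) (X : Set (Fin n → ℝ)) (hX : Convex ℝ X)
    (K : Matrix (Fin m) (Fin n) ℝ) (y : Fin m → ℝ)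
    (lam : ℝ) (hlam : 0 < lam)
    (R : (Fin n → ℝ) → ℝ) (hR : ConvexOn ℝ Set.univ R)
    (J : (Fin n → ℝ) → ℝ)
    (hJ : ∀ x, J x = (1 / 2) * ∑ i, (K.mulVec x i - y i) ^ 2 + lam * R x)
    (x₁ x₂ : Fin n → ℝ)
    (hx₁ : x₁ ∈ X) (hmin₁ : ∀ x ∈ X, J x₁ ≤ J x)
    (hx₂ : x₂ ∈ X) (hmin₂ : ∀ x ∈ X, J x₂ ≤ J x) :
    R x₁ = R x₂ := by
  have hJeq : J x₁ = J x₂ := le_antisymm (hmin₁ _ hx₂) (hmin₂ _ hx₁)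
  set c : Fin n → ℝ := (1/2 : ℝ) • x₁ + (1/2 : ℝ) • x₂ with hcdef
  have hc : c ∈ X := hX hx₁ hx₂ (by norm_num) (by norm_num) (by norm_num)
  have hRc : R c ≤ (1/2) * R x₁ + (1/2) * R x₂ := by
    have h := hR.2 (Set.mem_univ x₁) (Set.mem_univ x₂)
      (by norm_num : (0:ℝ) ≤ 1/2) (by norm_num : (0:ℝ) ≤ 1/2) (by norm_num)
    rw [smul_eq_mul, smul_eq_mul] at h
    exact h
  have hmv : ∀ i, K.mulVec c i = (K.mulVec x₁ i + K.mulVec x₂ i) / 2 := by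
    intro i
    rw [hcdef]
    simp [Matrix.mulVec_add, Matrix.mulVec_smul]
    ring
  set S1 := ∑ i, (K.mulVec x₁ i - y i) ^ 2 with hS1
  set S2 := ∑ i, (K.mulVec x₂ i - y i) ^ 2 with hS2
  set D := ∑ i, ((K.mulVec x₁ i - K.mulVec x₂ i) / 2) ^ 2 with hD
  have hSc : ∑ i, (K.mulVec c i - y i) ^ 2 = (S1 + S2) / 2 - D := by
    rw [hS1, hS2, hD]
    rw [← Finset.sum_add_distrib, Finset.sum_div, ← Finset.sum_sub_distrib]
    refine Finset.sum_congr rfl fun i _ => ?_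
    rw [hmv i]; ring
  have e1 : J x₁ = 1/2 * S1 + lam * R x₁ := by rw [hJ x₁, hS1]
  have e2 : J x₂ = 1/2 * S2 + lam * R x₂ := by rw [hJ x₂, hS2]
  have ec : J c = 1/2 * ((S1 + S2)/2 - D) + lam * R c := by rw [hJ c, hSc]
  have hle : J x₁ ≤ J c := hmin₁ _ hc
  have hlamRc : lam * R c ≤ 1/2 * (lam * R x₁) + 1/2 * (lam * R x₂) := by
    nlinarith [mul_le_mul_of_nonneg_left hRc hlam.le]
  have hDnn : 0 ≤ D := by
    rw [hD]; exact Finset.sum_nonneg fun i _ => sq_nonneg _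
  have hD0 : D = 0 := by linarith
  have hsum0 : ∑ i, ((K.mulVec x₁ i - K.mulVec x₂ i) / 2) ^ 2 = 0 := by
    rw [← hD]; exact hD0
  have hzero := (Finset.sum_eq_zero_iff_of_nonneg
    (fun i _ => sq_nonneg ((K.mulVec x₁ i - K.mulVec x₂ i) / 2))).1 hsum0
  have hab : ∀ i, K.mulVec x₁ i = K.mulVec x₂ i := by
    intro i
    have h0 := hzero i (Finset.mem_univ i)
    have h1 : (K.mulVec x₁ i - K.mulVec x₂ i) / 2 = 0 :=
      pow_eq_zero_iff (by norm_num) |>.1 h0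
    linarith
  have hS : S1 = S2 := by
    rw [hS1, hS2]
    exact Finset.sum_congr rfl fun i _ => by rw [hab i]
  have : lam * R x₁ = lam * R x₂ := by
    rw [e1, e2, hS] at hJeq; linarith
  exact mul_left_cancel₀ (ne_of_gt hlam) this
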